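/- arXiv:1401.7899 — 3 statements merged into one kernel-verified Lean document; each statement's English description precedes it below -/
import Mathlib

section
/- Let μ_1, …, μ_p be finite signed measures on ℝ and let A be a p×p real matrix. Then for any index i ∈ {1,…,p}, the Kolmogorov norm of the pushforward of the product measure μ_1 ⊗ ⋯ ⊗ μ_p under the linear map x ↦ Ax is at most 2‖μ_i‖_∞ · ∏_{k≠i} ‖μ_k‖_tv, where ‖·‖_∞ is the Kolmogorov norm and ‖·‖_tv is the total variation norm. -/
open MeasureTheory Set Filter Topology

/-- Kolmogorov norm of a signed measure on ℝ. -/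
noncomputable def kolNorm1 (s : SignedMeasure ℝ) : ℝ := ⨆ x : ℝ, |s (Set.Iic x)|

/-- Kolmogorov norm of a signed measure on ℝ^p (sup over lower orthants). -/
noncomputable def kolNorm {p : ℕ} (s : SignedMeasure (Fin p → ℝ)) : ℝ :=
  ⨆ x : Fin p → ℝ, |s (Set.Iic x)|

/-- Total variation norm of a signed measure. -/
noncomputable def tvNorm {α : Type*} [MeasurableSpace α] (s : SignedMeasure α) : ℝ :=
  (s.totalVariation Set.univ).toReal

/-- Jordan part of a signed measure on ℝ, selected by a Boolean. -/
noncomputable def jpart (s : SignedMeasure ℝ) (b : Bool) : Measure ℝ :=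
  bif b then s.toJordanDecomposition.negPart else s.toJordanDecomposition.posPart

instance (s : SignedMeasure ℝ) (b : Bool) : IsFiniteMeasure (jpart s b) := by
  cases b <;> simp only [jpart, cond] <;> infer_instance

/-- The product `μ_1 ⊗ ⋯ ⊗ μ_p` of finite signed measures on ℝ, as a signed
measure on ℝ^p, defined by multilinear expansion of the Jordan decompositions. -/
noncomputable def signedPi {p : ℕ} (μ : Fin p → SignedMeasure ℝ) :
    SignedMeasure (Fin p → ℝ) :=
  ∑ α : Fin p → Bool,
    ((-1 : ℝ) ^ (Finset.univ.filter (fun i => α i)).card) •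
      (Measure.pi (fun i => jpart (μ i) (α i))).toSignedMeasure

lemma sm_apply (s : SignedMeasure ℝ) {E : Set ℝ} (hE : MeasurableSet E) :
    s E = (s.toJordanDecomposition.posPart E).toReal
        - (s.toJordanDecomposition.negPart E).toReal := by
  conv_lhs => rw [← s.toSignedMeasure_toJordanDecomposition]
  rw [JordanDecomposition.toSignedMeasure, VectorMeasure.sub_apply,
    Measure.toSignedMeasure_apply_measurable hE, Measure.toSignedMeasure_apply_measurable hE]
  rfl

lemma abs_apply_le_tv (s : SignedMeasure ℝ) (E : Set ℝ) :
    |s E| ≤ (s.totalVariation Set.univ).toReal := by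
  by_cases hE : MeasurableSet E
  · rw [sm_apply s hE, SignedMeasure.totalVariation, Measure.add_apply,
      ENNReal.toReal_add (measure_ne_top _ _) (measure_ne_top _ _)]
    have h1 : (s.toJordanDecomposition.posPart E).toReal
        ≤ (s.toJordanDecomposition.posPart Set.univ).toReal :=
      ENNReal.toReal_mono (measure_ne_top _ _) (measure_mono (subset_univ _))
    have h2 : (s.toJordanDecomposition.negPart E).toReal
        ≤ (s.toJordanDecomposition.negPart Set.univ).toReal :=
      ENNReal.toReal_mono (measure_ne_top _ _) (measure_mono (subset_univ _))
    have h3 : (0:ℝ) ≤ (s.toJordanDecomposition.posPart E).toReal := ENNReal.toReal_nonneg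
    have h4 : (0:ℝ) ≤ (s.toJordanDecomposition.negPart E).toReal := ENNReal.toReal_nonneg
    rw [abs_sub_le_iff]
    constructor <;> linarith
  · rw [VectorMeasure.not_measurable _ hE]
    simp [ENNReal.toReal_nonneg]

lemma kol_bdd (s : SignedMeasure ℝ) : BddAbove (Set.range fun a : ℝ => |s (Set.Iic a)|) :=
  ⟨(s.totalVariation Set.univ).toReal, by rintro _ ⟨a, rfl⟩; exact abs_apply_le_tv s _⟩

lemma abs_Iic_le (s : SignedMeasure ℝ) (a : ℝ) : |s (Set.Iic a)| ≤ kolNorm1 s :=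
  le_ciSup (kol_bdd s) a

lemma kolNorm1_nonneg (s : SignedMeasure ℝ) : 0 ≤ kolNorm1 s :=
  le_trans (abs_nonneg _) (abs_Iic_le s 0)

lemma abs_iUnion_le (s : SignedMeasure ℝ) {f : ℕ → ℝ} (hf : Monotone f) :
    |s (⋃ n, Set.Iic (f n))| ≤ kolNorm1 s := by
  have hmono : Monotone fun n => Set.Iic (f n) := fun a b h => Iic_subset_Iic.2 (hf h)
  have hU : MeasurableSet (⋃ n, Set.Iic (f n)) := MeasurableSet.iUnion fun n => measurableSet_Iic
  have hpos := tendsto_measure_iUnion_atTop (μ := s.toJordanDecomposition.posPart) hmono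
  have hneg := tendsto_measure_iUnion_atTop (μ := s.toJordanDecomposition.negPart) hmono
  have h1 : Tendsto (fun n => s (Set.Iic (f n))) atTop (𝓝 (s (⋃ n, Set.Iic (f n)))) := by
    rw [sm_apply s hU]
    have e : (fun n => s (Set.Iic (f n)))
        = fun n => (s.toJordanDecomposition.posPart (Set.Iic (f n))).toReal
            - (s.toJordanDecomposition.negPart (Set.Iic (f n))).toReal :=
      funext fun n => sm_apply s measurableSet_Iic
    rw [e]
    exact Tendsto.sub (((ENNReal.tendsto_toReal (measure_ne_top _ _)).comp hpos))
      (((ENNReal.tendsto_toReal (measure_ne_top _ _)).comp hneg))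
  exact le_of_tendsto' h1.abs fun n => abs_Iic_le s (f n)

lemma abs_univ_le (s : SignedMeasure ℝ) : |s Set.univ| ≤ kolNorm1 s := by
  have h : (⋃ n : ℕ, Set.Iic ((n : ℝ))) = Set.univ := by
    ext t
    simp only [mem_iUnion, mem_Iic, mem_univ, iff_true]
    exact exists_nat_ge t
  rw [← h]
  exact abs_iUnion_le s fun a b hab => by exact_mod_cast hab

lemma abs_Iio_le (s : SignedMeasure ℝ) (b : ℝ) : |s (Set.Iio b)| ≤ kolNorm1 s := by
  have hmono : Monotone (fun n : ℕ => b - 1 / (n + 1)) := by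
    intro a c h
    have h1 : (1:ℝ) / (c + 1) ≤ 1 / (a + 1) := by
      apply one_div_le_one_div_of_le (by positivity)
      have : (a:ℝ) ≤ c := by exact_mod_cast h
      linarith
    simp only
    linarith
  have h : (⋃ n : ℕ, Set.Iic (b - 1 / (n + 1))) = Set.Iio b := by
    ext t
    simp only [mem_iUnion, mem_Iic, mem_Iio]
    constructor
    · rintro ⟨n, hn⟩
      have : (0:ℝ) < 1 / ((n:ℝ) + 1) := by positivity
      linarith
    · intro ht
      obtain ⟨n, hn⟩ := exists_nat_one_div_lt (sub_pos.2 ht)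
      exact ⟨n, by linarith⟩
  rw [← h]
  exact abs_iUnion_le s hmono

def Intv (T : Set ℝ) : Prop :=
  T = ∅ ∨ T = Set.univ ∨ (∃ a, T = Set.Iic a) ∨ (∃ a, T = Set.Ici a) ∨ ∃ a b, T = Set.Icc a b

lemma abs_le_of_intv (s : SignedMeasure ℝ) {T : Set ℝ} (hT : Intv T) :
    |s T| ≤ 2 * kolNorm1 s := by
  have hK := kolNorm1_nonneg s
  rcases hT with rfl | rfl | ⟨a, rfl⟩ | ⟨a, rfl⟩ | ⟨a, b, rfl⟩
  · simp only [VectorMeasure.empty, abs_zero]; linarith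
  · linarith [abs_univ_le s]
  · linarith [abs_Iic_le s a]
  · have hdisj : Disjoint (Set.Iio a) (Set.Ici a) := by
      rw [Set.disjoint_left]; intro t ht1 ht2; exact absurd (Set.mem_Ici.1 ht2) (not_le.2 ht1)
    have hsplit : s Set.univ = s (Set.Iio a) + s (Set.Ici a) := by
      rw [← Set.Iio_union_Ici (a := a)]
      exact VectorMeasure.of_union hdisj measurableSet_Iio measurableSet_Ici
    have heq : s (Set.Ici a) = s Set.univ - s (Set.Iio a) := by linarith
    rw [heq]
    refine le_trans (abs_sub _ _) ?_
    linarith [abs_univ_le s, abs_Iio_le s a]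
  · rcases le_or_gt a b with hab | hab
    · have hdisj : Disjoint (Set.Iio a) (Set.Icc a b) := by
        rw [Set.disjoint_left]; intro t ht1 ht2; exact absurd ht2.1 (not_le.2 ht1)
      have hcup : Set.Iio a ∪ Set.Icc a b = Set.Iic b := by
        ext t
        simp only [Set.mem_union, Set.mem_Iio, Set.mem_Icc, Set.mem_Iic]
        constructor
        · rintro (h | ⟨h1, h2⟩) <;> linarith
        · intro h
          rcases lt_or_ge t a with h' | h'
          · exact Or.inl h'
          · exact Or.inr ⟨h', h⟩
      have hsplit : s (Set.Iic b) = s (Set.Iio a) + s (Set.Icc a b) := by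
        rw [← hcup]
        exact VectorMeasure.of_union hdisj measurableSet_Iio measurableSet_Icc
      have heq : s (Set.Icc a b) = s (Set.Iic b) - s (Set.Iio a) := by linarith
      rw [heq]
      refine le_trans (abs_sub _ _) ?_
      linarith [abs_Iic_le s b, abs_Iio_le s a]
    · rw [Set.Icc_eq_empty (not_le.2 hab)]
      simp only [VectorMeasure.empty, abs_zero]; linarith

lemma intv_inter_Iic {T : Set ℝ} (hT : Intv T) (c : ℝ) : Intv (T ∩ Set.Iic c) := by
  rcases hT with rfl | rfl | ⟨a, rfl⟩ | ⟨a, rfl⟩ | ⟨a, b, rfl⟩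
  · left; simp
  · right; right; left; exact ⟨c, by simp⟩
  · right; right; left; exact ⟨min a c, Set.Iic_inter_Iic⟩
  · right; right; right; right; exact ⟨a, c, Set.Ici_inter_Iic⟩
  · right; right; right; right
    refine ⟨a, min b c, ?_⟩
    ext t
    simp only [Set.mem_inter_iff, Set.mem_Icc, Set.mem_Iic, le_min_iff]
    tauto

lemma intv_inter_Ici {T : Set ℝ} (hT : Intv T) (c : ℝ) : Intv (T ∩ Set.Ici c) := by
  rcases hT with rfl | rfl | ⟨a, rfl⟩ | ⟨a, rfl⟩ | ⟨a, b, rfl⟩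
  · left; simp
  · right; right; right; left; exact ⟨c, by simp⟩
  · right; right; right; right
    exact ⟨c, a, by rw [Set.inter_comm, Set.Ici_inter_Iic]⟩
  · right; right; right; left; exact ⟨max a c, Set.Ici_inter_Ici⟩
  · right; right; right; right
    refine ⟨max a c, b, ?_⟩
    ext t
    simp only [Set.mem_inter_iff, Set.mem_Icc, Set.mem_Ici, max_le_iff]
    tauto

lemma intv_inter_halfplane {T : Set ℝ} (hT : Intv T) (a d : ℝ) :
    Intv (T ∩ {t : ℝ | a * t ≤ d}) := by
  rcases lt_trichotomy a 0 with ha | rfl | ha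
  · have h : {t : ℝ | a * t ≤ d} = Set.Ici (d / a) := by
      ext t
      simp only [Set.mem_setOf_eq, Set.mem_Ici]
      rw [div_le_iff_of_neg ha, mul_comm]
    rw [h]; exact intv_inter_Ici hT _
  · by_cases hd : 0 ≤ d
    · have h : {t : ℝ | (0:ℝ) * t ≤ d} = Set.univ := by
        ext t; simp [hd]
      rw [h, Set.inter_univ]; exact hT
    · have h : {t : ℝ | (0:ℝ) * t ≤ d} = ∅ := by
        ext t
        simp only [Set.mem_setOf_eq, zero_mul, Set.mem_empty_iff_false, iff_false]
        linarith
      rw [h, Set.inter_empty]; left; rfl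
  · have h : {t : ℝ | a * t ≤ d} = Set.Iic (d / a) := by
      ext t
      simp only [Set.mem_setOf_eq, Set.mem_Iic]
      rw [le_div_iff₀ ha, mul_comm]
    rw [h]; exact intv_inter_Iic hT _

lemma intv_iInter {m : ℕ} (a d : Fin m → ℝ) :
    Intv (⋂ j, {t : ℝ | a j * t ≤ d j}) := by
  induction m with
  | zero =>
      rw [Set.iInter_of_empty]
      right; left; rfl
  | succ m ih =>
      have h : (⋂ j : Fin (m + 1), {t : ℝ | a j * t ≤ d j})
          = (⋂ j : Fin m, {t : ℝ | a j.succ * t ≤ d j.succ}) ∩ {t : ℝ | a 0 * t ≤ d 0} := by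
        ext t
        simp only [Set.mem_iInter, Set.mem_inter_iff, Set.mem_setOf_eq, Fin.forall_fin_succ]
        tauto
      rw [h]
      exact intv_inter_halfplane (ih _ _) _ _

lemma sm_sum_apply {γ : Type*} [MeasurableSpace γ] {ι : Type*} (s : Finset ι)
    (v : ι → SignedMeasure γ) (E : Set γ) : (∑ a ∈ s, v a) E = ∑ a ∈ s, v a E :=
  map_sum (⟨⟨fun w : SignedMeasure γ => w E, rfl⟩, fun _ _ => rfl⟩ : SignedMeasure γ →+ ℝ) v s

lemma sign_eq_prod {m : ℕ} (α : Fin m → Bool) :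
    ((-1 : ℝ) ^ (Finset.univ.filter (fun j => α j)).card)
      = ∏ j, (if α j then (-1 : ℝ) else 1) := by
  rw [Finset.prod_ite, Finset.prod_const, Finset.prod_const, one_pow, mul_one]

lemma sum_pi_bool {n : ℕ} (f : Fin n → Bool → ℝ) :
    ∑ β : Fin n → Bool, ∏ j, f j (β j) = ∏ j, (f j false + f j true) := by
  rw [← Fintype.prod_sum (fun j b => f j b)]
  exact Finset.prod_congr rfl fun j _ => by rw [Fintype.sum_bool]; ring

/-- `‖L_A(μ_1 ⊗ ⋯ ⊗ μ_p)‖_∞ ≤ 2‖μ_i‖_∞ ∏_{k≠i} ‖μ_k‖_tv`. -/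
theorem kolNorm_map_signedPi_le {p : ℕ} (μ : Fin p → SignedMeasure ℝ)
    (A : Matrix (Fin p) (Fin p) ℝ) (i : Fin p) :
    kolNorm ((signedPi μ).map A.mulVec) ≤
      2 * kolNorm1 (μ i) * ∏ k ∈ Finset.univ.erase i, tvNorm (μ k) := by
  obtain ⟨n, rfl⟩ : ∃ n, p = n + 1 := ⟨p - 1, (Nat.succ_pred_eq_of_pos i.pos).symm⟩
  classical
  have hK0 : 0 ≤ kolNorm1 (μ i) := kolNorm1_nonneg (μ i)
  have hAmeas : Measurable (A.mulVec) := by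
    unfold Matrix.mulVec dotProduct
    exact measurable_pi_lambda _ fun j => Finset.measurable_sum _ fun k _ =>
      (measurable_pi_apply k).const_mul _
  refine ciSup_le fun x => ?_
  have hIic : MeasurableSet (Set.Iic x) := by
    rw [← Set.pi_univ_Iic]
    exact MeasurableSet.univ_pi fun j => measurableSet_Iic
  rw [VectorMeasure.map_apply _ hAmeas hIic]
  set S := A.mulVec ⁻¹' Set.Iic x with hSdef
  have hS : MeasurableSet S := hIic.preimage hAmeas
  set e := MeasurableEquiv.piFinSuccAbove (fun _ : Fin (n + 1) => ℝ) i with hedef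
  set E := e.symm ⁻¹' S with hEdef
  have hE : MeasurableSet E := hS.preimage e.symm.measurable
  -- sections
  have hsec_meas : ∀ y : Fin n → ℝ, MeasurableSet ((fun t : ℝ => (t, y)) ⁻¹' E) :=
    fun y => hE.preimage (measurable_id.prodMk measurable_const)
  have hsecK : ∀ y : Fin n → ℝ, |(μ i) ((fun t : ℝ => (t, y)) ⁻¹' E)| ≤ 2 * kolNorm1 (μ i) := by
    intro y
    have hmv : ∀ (t : ℝ) (j : Fin (n + 1)),
        A.mulVec ((i.insertNth t y : Fin (n+1) → ℝ)) j = A j i * t + ∑ l, A j (i.succAbove l) * y l := by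
      intro t j
      simp only [Matrix.mulVec, dotProduct]
      rw [Fin.sum_univ_succAbove (fun k => A j k * (i.insertNth t y : Fin (n+1) → ℝ) k) i]
      simp [Fin.insertNth_apply_same, Fin.insertNth_apply_succAbove]
    have hset : (fun t : ℝ => (t, y)) ⁻¹' E
        = ⋂ j, {t : ℝ | A j i * t ≤ x j - ∑ l, A j (i.succAbove l) * y l} := by
      ext t
      simp only [hEdef, Set.mem_preimage, hedef,
        MeasurableEquiv.piFinSuccAbove_symm_apply, Fin.insertNthEquiv_apply, hSdef, Set.mem_Iic, Set.mem_iInter,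
        Set.mem_setOf_eq]
      rw [Pi.le_def]
      refine forall_congr' fun j => ?_
      rw [show (Fin.insertNthEquiv (fun _ : Fin (n + 1) => ℝ) i) (t, y)
        = (i.insertNth t y : Fin (n + 1) → ℝ) from rfl, hmv t j]
      constructor <;> intro h <;> linarith
    rw [hset]
    exact abs_le_of_intv (μ i) (intv_iInter _ _)
  -- measures
  set ρ : (Fin n → Bool) → Measure (Fin n → ℝ) :=
    fun β => Measure.pi (fun j => jpart (μ (i.succAbove j)) (β j)) with hρ
  -- fubini key
  have key : ∀ (b : Bool) (β : Fin n → Bool),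
      (Measure.pi fun j => jpart (μ j) ((i.insertNth b β : Fin (n+1) → Bool) j)) S
        = ∫⁻ y, jpart (μ i) b ((fun t : ℝ => (t, y)) ⁻¹' E) ∂(ρ β) := by
    intro b β
    have hmp := measurePreserving_piFinSuccAbove (fun j => jpart (μ j) ((i.insertNth b β : Fin (n+1) → Bool) j)) i
    have hfam1 : jpart (μ i) ((i.insertNth b β : Fin (n+1) → Bool) i) = jpart (μ i) b := by
      rw [Fin.insertNth_apply_same]
    have hfam2 : (Measure.pi fun j => jpart (μ (i.succAbove j)) ((i.insertNth b β : Fin (n+1) → Bool) (i.succAbove j)))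
        = ρ β := by
      congr 1; funext j; rw [Fin.insertNth_apply_succAbove]
    have h2 : (Measure.pi fun j => jpart (μ j) ((i.insertNth b β : Fin (n+1) → Bool) j)) S
        = ((jpart (μ i) b).prod (ρ β)) E := by
      have h3 : ((jpart (μ i) b).prod (ρ β)) E
          = (Measure.map e (Measure.pi fun j => jpart (μ j) ((i.insertNth b β : Fin (n+1) → Bool) j))) E := by
        rw [hmp.map_eq, hfam1, hfam2]
      rw [h3, MeasurableEquiv.map_apply]
      congr 1
      rw [hEdef, ← Set.preimage_comp, MeasurableEquiv.symm_comp_self, Set.preimage_id]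
    rw [h2, Measure.prod_apply_symm hE]
  -- expansion
  have expand : (signedPi μ) S = ∑ α : Fin (n + 1) → Bool,
      (∏ j, (if α j then (-1 : ℝ) else 1))
        * ((Measure.pi fun j => jpart (μ j) (α j)) S).toReal := by
    rw [signedPi, sm_sum_apply]
    refine Finset.sum_congr rfl fun α _ => ?_
    rw [VectorMeasure.smul_apply, Measure.toSignedMeasure_apply_measurable hS, smul_eq_mul,
      sign_eq_prod]
    rfl
  have reindex : (signedPi μ) S = ∑ β : Fin n → Bool, ∑ b : Bool,
      (∏ j, (if (i.insertNth b β : Fin (n+1) → Bool) j then (-1 : ℝ) else 1))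
        * ((Measure.pi fun j => jpart (μ j) ((i.insertNth b β : Fin (n+1) → Bool) j)) S).toReal := by
    rw [expand, ← Equiv.sum_comp (Fin.insertNthEquiv (fun _ => Bool) i)
      (fun α : Fin (n + 1) → Bool => (∏ j, (if α j then (-1 : ℝ) else 1))
        * ((Measure.pi fun j => jpart (μ j) (α j)) S).toReal),
      Fintype.sum_prod_type, Finset.sum_comm]
    simp only [Fin.insertNthEquiv_apply]
  -- inner sum
  have inner : ∀ β : Fin n → Bool,
      (∑ b : Bool, (∏ j, (if (i.insertNth b β : Fin (n+1) → Bool) j then (-1 : ℝ) else 1))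
        * ((Measure.pi fun j => jpart (μ j) ((i.insertNth b β : Fin (n+1) → Bool) j)) S).toReal)
      = (∏ j, (if β j then (-1 : ℝ) else 1))
          * ∫ y, (μ i) ((fun t : ℝ => (t, y)) ⁻¹' E) ∂(ρ β) := by
    intro β
    have hsplit : ∀ b : Bool, (∏ j, (if (i.insertNth b β : Fin (n+1) → Bool) j then (-1 : ℝ) else 1))
        = (if b then (-1 : ℝ) else 1) * ∏ j, (if β j then (-1 : ℝ) else 1) := by
      intro b
      rw [Fin.prod_univ_succAbove (fun j => if (i.insertNth b β : Fin (n+1) → Bool) j then (-1 : ℝ) else 1) i]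
      simp [Fin.insertNth_apply_same, Fin.insertNth_apply_succAbove]
    have hint : ∀ b : Bool,
        (∫⁻ y, jpart (μ i) b ((fun t : ℝ => (t, y)) ⁻¹' E) ∂(ρ β)).toReal
          = ∫ y, (jpart (μ i) b ((fun t : ℝ => (t, y)) ⁻¹' E)).toReal ∂(ρ β) := by
      intro b
      refine (integral_toReal ((measurable_measure_prodMk_right hE).aemeasurable) ?_).symm
      exact Filter.Eventually.of_forall fun y =>
        lt_of_le_of_lt (measure_mono (Set.subset_univ _)) (measure_lt_top _ _)
    have hinteg : ∀ b : Bool,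
        Integrable (fun y => (jpart (μ i) b ((fun t : ℝ => (t, y)) ⁻¹' E)).toReal) (ρ β) := by
      intro b
      refine integrable_toReal_of_lintegral_ne_top
        ((measurable_measure_prodMk_right hE).aemeasurable) ?_
      refine ne_of_lt (lt_of_le_of_lt
        (lintegral_mono fun y => measure_mono (Set.subset_univ _)) ?_)
      rw [lintegral_const]
      exact ENNReal.mul_lt_top (measure_lt_top _ _) (measure_lt_top _ _)
    have hμsec : ∀ y : Fin n → ℝ, (μ i) ((fun t : ℝ => (t, y)) ⁻¹' E)
        = (jpart (μ i) false ((fun t : ℝ => (t, y)) ⁻¹' E)).toReal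
          - (jpart (μ i) true ((fun t : ℝ => (t, y)) ⁻¹' E)).toReal := by
      intro y
      rw [sm_apply (μ i) (hsec_meas y)]
      rfl
    rw [Fintype.sum_bool, hsplit, hsplit, key, key, hint, hint]
    rw [show (if true then (-1 : ℝ) else 1) = -1 from rfl,
      show (if false then (-1 : ℝ) else 1) = 1 from rfl]
    have hsub : (∫ y, (μ i) ((fun t : ℝ => (t, y)) ⁻¹' E) ∂(ρ β))
        = (∫ y, (jpart (μ i) false ((fun t : ℝ => (t, y)) ⁻¹' E)).toReal ∂(ρ β))
          - ∫ y, (jpart (μ i) true ((fun t : ℝ => (t, y)) ⁻¹' E)).toReal ∂(ρ β) := by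
      rw [← integral_sub (hinteg false) (hinteg true)]
      exact integral_congr_ae (Filter.Eventually.of_forall fun y => hμsec y)
    rw [hsub]
    ring
  -- final bound
  have hRHS : ∀ β : Fin n → Bool,
      |(∏ j, (if β j then (-1 : ℝ) else 1))
          * ∫ y, (μ i) ((fun t : ℝ => (t, y)) ⁻¹' E) ∂(ρ β)|
        ≤ 2 * kolNorm1 (μ i) * ((ρ β) Set.univ).toReal := by
    intro β
    rw [abs_mul]
    have habs : |∏ j, (if β j then (-1 : ℝ) else 1)| = 1 := by
      rw [Finset.abs_prod]
      rw [Finset.prod_congr rfl fun j (_ : j ∈ Finset.univ) =>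
        show |if β j then (-1 : ℝ) else 1| = 1 by cases hb : β j <;> simp]
      exact Finset.prod_const_one
    rw [habs, one_mul]
    have hb := norm_integral_le_of_norm_le_const (μ := ρ β)
      (C := 2 * kolNorm1 (μ i))
      (Filter.Eventually.of_forall fun y : Fin n → ℝ => by
        rw [Real.norm_eq_abs]; exact hsecK y)
    rwa [Real.norm_eq_abs] at hb
  have h1 : |(signedPi μ) S| ≤ ∑ β : Fin n → Bool,
      2 * kolNorm1 (μ i) * ((ρ β) Set.univ).toReal := by
    rw [reindex, Finset.sum_congr rfl fun β (_ : β ∈ Finset.univ) => inner β]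
    exact le_trans (Finset.abs_sum_le_sum_abs _ _) (Finset.sum_le_sum fun β _ => hRHS β)
  have h2 : ∑ β : Fin n → Bool, ((ρ β) Set.univ).toReal
      = ∏ k ∈ Finset.univ.erase i, tvNorm (μ k) := by
    have hβ : ∀ β : Fin n → Bool, ((ρ β) Set.univ).toReal
        = ∏ j, ((jpart (μ (i.succAbove j)) (β j)) Set.univ).toReal := by
      intro β
      rw [hρ]
      simp only
      rw [Measure.pi_univ, ENNReal.toReal_prod]
    rw [Finset.sum_congr rfl fun β (_ : β ∈ Finset.univ) => hβ β,
      sum_pi_bool (fun j b => ((jpart (μ (i.succAbove j)) b) Set.univ).toReal)]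
    have hj : ∀ j : Fin n, ((jpart (μ (i.succAbove j)) false) Set.univ).toReal
        + ((jpart (μ (i.succAbove j)) true) Set.univ).toReal = tvNorm (μ (i.succAbove j)) := by
      intro j
      rw [tvNorm, SignedMeasure.totalVariation, Measure.add_apply,
        ENNReal.toReal_add (measure_ne_top _ _) (measure_ne_top _ _)]
      rfl
    rw [Finset.prod_congr rfl fun j (_ : j ∈ Finset.univ) => hj j]
    refine Finset.prod_bij (fun j _ => i.succAbove j)
      (fun j _ => Finset.mem_erase.2 ⟨Fin.succAbove_ne i j, Finset.mem_univ _⟩)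
      (fun a _ b _ h => Fin.succAbove_right_injective h)
      (fun k hk => ?_) (fun j _ => rfl)
    obtain ⟨j, hj'⟩ := Fin.exists_succAbove_eq (Finset.mem_erase.1 hk).1
    exact ⟨j, Finset.mem_univ _, hj'⟩
  exact le_trans h1 (by rw [← Finset.mul_sum, h2])
end

section
/- Let ξ, ζ be probability measures on ℝ with ξ ≠ ζ, let P_e(β) = βξ + (1-β)ζ, and let A be a p×p real matrix. Then as β → 0, the signed measures (L_A(P_e(β)^{⊗p}) − L_A(ζ^{⊗p})) / ‖P_e(β) − ζ‖_∞ converge in Kolmogorov norm to ∑_{k=1}^p L_A(ζ^{⊗(k-1)} ⊗ ν ⊗ ζ^{⊗(p-k)}), where ν = (ξ − ζ)/‖ξ − ζ‖_∞. -/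
open MeasureTheory Filter Set

lemma vm_sum_apply {α M : Type*} [MeasurableSpace α] [AddCommMonoid M]
    [TopologicalSpace M] [ContinuousAdd M]
    {ι : Type*} (t : Finset ι) (m : ι → VectorMeasure α M) (E : Set α) :
    (∑ i ∈ t, m i) E = ∑ i ∈ t, m i E := by
  induction t using Finset.cons_induction with
  | empty => simp
  | cons a t ha ih => simp [Finset.sum_cons, VectorMeasure.add_apply, ih]

lemma sm_apply_jpart (s : SignedMeasure ℝ) {E : Set ℝ} (hE : MeasurableSet E) :
    s E = (jpart s false E).toReal - (jpart s true E).toReal := by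
  conv_lhs => rw [← s.toSignedMeasure_toJordanDecomposition]
  rw [JordanDecomposition.toSignedMeasure, VectorMeasure.sub_apply,
    Measure.toSignedMeasure_apply_measurable hE, Measure.toSignedMeasure_apply_measurable hE]
  rfl

lemma prod_add_compl {p : ℕ} (f g : Fin p → ℝ) :
    ∏ i, (f i + g i) = ∑ t : Finset (Fin p), (∏ i ∈ t, f i) * ∏ i ∈ tᶜ, g i := by
  rw [Finset.prod_add, ← Finset.powerset_univ]
  exact Finset.sum_congr rfl fun t _ => by rw [Finset.compl_eq_univ_sdiff]

lemma prod_neg' {p : ℕ} (t : Finset (Fin p)) (x : Fin p → ℝ) :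
    ∏ i ∈ t, (-x i) = (-1 : ℝ)^t.card * ∏ i ∈ t, x i := by
  rw [← Finset.prod_const, ← Finset.prod_mul_distrib]
  exact Finset.prod_congr rfl fun i _ => by ring

lemma signedPi_apply_pi {p : ℕ} (μ : Fin p → SignedMeasure ℝ) (s : Fin p → Set ℝ)
    (hs : ∀ i, MeasurableSet (s i)) :
    signedPi μ (Set.pi Set.univ s) = ∏ i, μ i (s i) := by
  have hps : MeasurableSet (Set.pi Set.univ s) := MeasurableSet.univ_pi hs
  rw [signedPi, vm_sum_apply]
  simp only [VectorMeasure.smul_apply, Measure.toSignedMeasure_apply_measurable hps,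
    Measure.pi_pi, smul_eq_mul, ENNReal.toReal_prod, measureReal_def]
  have key : ∀ i, μ i (s i)
      = (-(jpart (μ i) true (s i)).toReal) + (jpart (μ i) false (s i)).toReal := by
    intro i; rw [sm_apply_jpart (μ i) (hs i)]; ring
  simp only [key]
  rw [prod_add_compl]
  apply Fintype.sum_equiv
    ⟨fun α => Finset.univ.filter (fun i => α i), fun t i => decide (i ∈ t),
      fun α => by funext i; simp, fun t => by ext i; simp⟩
  intro α
  set t := Finset.univ.filter (fun i => α i = true) with ht
  simp only [Equiv.coe_fn_mk, ← ht]
  rw [prod_neg', mul_assoc]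
  congr 1
  have h1 : ∏ i ∈ t, ((jpart (μ i) true) (s i)).toReal
      = ∏ i ∈ t, ((jpart (μ i) (α i)) (s i)).toReal :=
    Finset.prod_congr rfl fun i hi => by
      rw [ht, Finset.mem_filter] at hi; rw [hi.2]
  have h2 : ∏ i ∈ tᶜ, ((jpart (μ i) false) (s i)).toReal
      = ∏ i ∈ tᶜ, ((jpart (μ i) (α i)) (s i)).toReal :=
    Finset.prod_congr rfl fun i hi => by
      rw [Finset.mem_compl, ht, Finset.mem_filter] at hi
      rw [Bool.eq_false_iff.mpr (fun h => hi ⟨Finset.mem_univ i, h⟩)]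
  rw [h1, h2, Finset.prod_mul_prod_compl]

lemma sm_apply_jd {α : Type*} [MeasurableSpace α] (s : SignedMeasure α) {E : Set α}
    (hE : MeasurableSet E) :
    s E = (s.toJordanDecomposition.posPart E).toReal
      - (s.toJordanDecomposition.negPart E).toReal := by
  conv_lhs => rw [← s.toSignedMeasure_toJordanDecomposition]
  rw [JordanDecomposition.toSignedMeasure, VectorMeasure.sub_apply,
    Measure.toSignedMeasure_apply_measurable hE, Measure.toSignedMeasure_apply_measurable hE]
  rfl

lemma signedMeasure_ext_of_pi {p : ℕ} {s t : SignedMeasure (Fin p → ℝ)}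
    (h : ∀ f : Fin p → Set ℝ, (∀ i, MeasurableSet (f i)) →
      s (Set.pi Set.univ f) = t (Set.pi Set.univ f)) : s = t := by
  set P := s.toJordanDecomposition.posPart + t.toJordanDecomposition.negPart with hP
  set Q := t.toJordanDecomposition.posPart + s.toJordanDecomposition.negPart with hQ
  have key : ∀ E : Set (Fin p → ℝ), MeasurableSet E → s E = t E → P E = Q E := by
    intro E hE hst
    rw [sm_apply_jd s hE, sm_apply_jd t hE] at hst
    rw [hP, hQ, Measure.add_apply, Measure.add_apply,
      ← ENNReal.toReal_eq_toReal_iff' (by finiteness) (by finiteness),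
      ENNReal.toReal_add (by finiteness) (by finiteness),
      ENNReal.toReal_add (by finiteness) (by finiteness)]
    linarith
  have hPQ : P = Q := by
    refine ext_of_generate_finite _ generateFrom_pi.symm isPiSystem_pi ?_ ?_
    · rintro E ⟨f, hf, rfl⟩
      exact key _ (MeasurableSet.univ_pi fun i => hf i (Set.mem_univ i))
        (h f fun i => hf i (Set.mem_univ i))
    · have : (Set.univ : Set (Fin p → ℝ)) = Set.pi Set.univ (fun _ => Set.univ) := by
        simp
      rw [this]
      exact key _ (MeasurableSet.univ_pi fun _ => MeasurableSet.univ)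
        (h _ fun _ => MeasurableSet.univ)
  refine VectorMeasure.ext fun E hE => ?_
  have hE1 : P E = Q E := by rw [hPQ]
  rw [hP, hQ, Measure.add_apply, Measure.add_apply,
    ← ENNReal.toReal_eq_toReal_iff' (by finiteness) (by finiteness),
    ENNReal.toReal_add (by finiteness) (by finiteness),
    ENNReal.toReal_add (by finiteness) (by finiteness)] at hE1
  rw [sm_apply_jd s hE, sm_apply_jd t hE]
  linarith

noncomputable def sBound {p : ℕ} (μ : Fin p → SignedMeasure ℝ) : ℝ :=
  ∑ α : Fin p → Bool, ((Measure.pi (fun i => jpart (μ i) (α i))) Set.univ).toReal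

lemma sBound_nonneg {p : ℕ} (μ : Fin p → SignedMeasure ℝ) : 0 ≤ sBound μ :=
  Finset.sum_nonneg fun _ _ => ENNReal.toReal_nonneg

lemma abs_signedPi_le {p : ℕ} (μ : Fin p → SignedMeasure ℝ) {E : Set (Fin p → ℝ)}
    (hE : MeasurableSet E) : |signedPi μ E| ≤ sBound μ := by
  rw [signedPi, vm_sum_apply]
  refine (Finset.abs_sum_le_sum_abs _ _).trans (Finset.sum_le_sum fun α _ => ?_)
  rw [VectorMeasure.smul_apply, Measure.toSignedMeasure_apply_measurable hE, smul_eq_mul,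
    abs_mul, abs_pow, abs_neg, abs_one, one_pow, one_mul,
    abs_of_nonneg measureReal_nonneg]
  exact ENNReal.toReal_mono (measure_ne_top _ _) (measure_mono (Set.subset_univ E))

lemma prod_ite_compl {p : ℕ} (S : Finset (Fin p)) (a b : Fin p → ℝ) :
    (∏ i, if i ∈ S then a i else b i) = (∏ i ∈ S, a i) * ∏ i ∈ Sᶜ, b i := by
  rw [← Finset.prod_mul_prod_compl S (fun i => if i ∈ S then a i else b i)]
  congr 1
  · exact Finset.prod_congr rfl fun i hi => if_pos hi
  · exact Finset.prod_congr rfl fun i hi => if_neg (Finset.mem_compl.mp hi)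

lemma signedPi_expand {p : ℕ} (ζ' ν' : SignedMeasure ℝ) (β : ℝ) :
    signedPi (fun _ : Fin p => ζ' + β • ν')
      = ∑ S : Finset (Fin p), β ^ S.card •
          signedPi (fun i => if i ∈ S then ν' else ζ') := by
  apply signedMeasure_ext_of_pi
  intro f hf
  rw [signedPi_apply_pi _ _ hf, vm_sum_apply]
  simp only [VectorMeasure.smul_apply, signedPi_apply_pi _ _ hf, smul_eq_mul,
    VectorMeasure.add_apply]
  have hcomm : ∏ i, (ζ' (f i) + β * ν' (f i)) = ∏ i, (β * ν' (f i) + ζ' (f i)) :=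
    Finset.prod_congr rfl fun i _ => add_comm _ _
  rw [hcomm, prod_add_compl]
  refine Finset.sum_congr rfl fun S _ => ?_
  have h2 : ∀ i : Fin p, ((if i ∈ S then ν' else ζ') : SignedMeasure ℝ) (f i)
      = if i ∈ S then ν' (f i) else ζ' (f i) := fun i => by
    by_cases h : i ∈ S <;> simp [h]
  simp only [h2]
  rw [prod_ite_compl, Finset.prod_mul_distrib, Finset.prod_const, mul_assoc]

lemma signedPi_smul_slot {p : ℕ} (ζ' m : SignedMeasure ℝ) (r : ℝ) (k : Fin p) :
    signedPi (fun i => if i = k then r • m else ζ')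
      = r • signedPi (fun i : Fin p => if i = k then m else ζ') := by
  apply signedMeasure_ext_of_pi
  intro f hf
  rw [signedPi_apply_pi _ _ hf, VectorMeasure.smul_apply, signedPi_apply_pi _ _ hf,
    smul_eq_mul, Fintype.prod_eq_mul_prod_compl k, Fintype.prod_eq_mul_prod_compl k,
    if_pos rfl, if_pos rfl, VectorMeasure.smul_apply, smul_eq_mul, mul_assoc]
  congr 2
  refine Finset.prod_congr rfl fun i hi => ?_
  rw [Finset.mem_compl, Finset.mem_singleton] at hi
  rw [if_neg hi, if_neg hi]

lemma kolNorm_nonneg {p : ℕ} (s : SignedMeasure (Fin p → ℝ)) : 0 ≤ kolNorm s :=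
  Real.iSup_nonneg fun _ => abs_nonneg _

lemma kolNorm1_smul (ν' : SignedMeasure ℝ) {β : ℝ} (hβ : 0 ≤ β) :
    kolNorm1 (β • ν') = β * kolNorm1 ν' := by
  unfold kolNorm1
  rw [Real.mul_iSup_of_nonneg hβ]
  exact iSup_congr fun x => by
    rw [VectorMeasure.smul_apply, smul_eq_mul, abs_mul, abs_of_nonneg hβ]

lemma measurableSet_Iic_pi {p : ℕ} (x : Fin p → ℝ) : MeasurableSet (Set.Iic x) := by
  rw [show Set.Iic x = Set.pi Set.univ (fun i => Set.Iic (x i)) from by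
    ext y; simp [Pi.le_def, Set.mem_pi]]
  exact .univ_pi fun i => measurableSet_Iic

lemma kolNorm1_pos {ξ ζ : Measure ℝ} [IsProbabilityMeasure ξ] [IsProbabilityMeasure ζ]
    (hξζ : ξ ≠ ζ) : 0 < kolNorm1 (ξ.toSignedMeasure - ζ.toSignedMeasure) := by
  set ν' := ξ.toSignedMeasure - ζ.toSignedMeasure with hν'
  have happ : ∀ x : ℝ, ν' (Set.Iic x) = (ξ (Set.Iic x)).toReal - (ζ (Set.Iic x)).toReal := by
    intro x
    rw [hν', VectorMeasure.sub_apply, Measure.toSignedMeasure_apply_measurable measurableSet_Iic,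
      Measure.toSignedMeasure_apply_measurable measurableSet_Iic]
    rfl
  have hle1 : ∀ (μ : Measure ℝ) (_ : IsProbabilityMeasure μ) (x : ℝ),
      (μ (Set.Iic x)).toReal ≤ 1 := by
    intro μ hμ x
    have := prob_le_one (μ := μ) (s := Set.Iic x)
    simpa using ENNReal.toReal_mono (by norm_num) this
  have hbdd : BddAbove (Set.range fun x : ℝ => |ν' (Set.Iic x)|) := by
    refine ⟨2, ?_⟩
    rintro r ⟨x, rfl⟩
    simp only []
    rw [happ]
    have h1 := hle1 ξ ‹_› x
    have h2 := hle1 ζ ‹_› x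
    have h3 : (0:ℝ) ≤ (ξ (Set.Iic x)).toReal := ENNReal.toReal_nonneg
    have h4 : (0:ℝ) ≤ (ζ (Set.Iic x)).toReal := ENNReal.toReal_nonneg
    rw [abs_le]; constructor <;> linarith
  by_contra hc
  push_neg at hc
  apply hξζ
  refine MeasureTheory.Measure.ext_of_Iic ξ ζ fun x => ?_
  have h0 : |ν' (Set.Iic x)| ≤ 0 := (le_ciSup hbdd x).trans hc
  have h0' : ν' (Set.Iic x) = 0 := abs_eq_zero.mp (le_antisymm h0 (abs_nonneg _))
  rw [happ] at h0'
  exact (ENNReal.toReal_eq_toReal_iff' (measure_ne_top _ _) (measure_ne_top _ _)).mp (by linarith)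


/-- Let `ξ ≠ ζ` be probability measures on ℝ, `P_e(β) = βξ + (1-β)ζ`, and `A` a
`p×p` matrix. As `β → 0` (within `(0,1)`), the signed measures
`(L_A(P_e(β)^{⊗p}) − L_A(ζ^{⊗p}))/‖P_e(β) − ζ‖_∞` converge in Kolmogorov norm
to `∑_{k=1}^p L_A(ζ^{⊗(k-1)} ⊗ ν ⊗ ζ^{⊗(p-k)})`, with `ν = (ξ−ζ)/‖ξ−ζ‖_∞`. -/
theorem tendsto_normalized_map_signedPi
    {p : ℕ} (ξ ζ : Measure ℝ) [IsProbabilityMeasure ξ] [IsProbabilityMeasure ζ]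
    (hξζ : ξ ≠ ζ) (A : Matrix (Fin p) (Fin p) ℝ) :
    Tendsto (fun β : ℝ =>
        kolNorm
          ((kolNorm1 ((β • ξ.toSignedMeasure + (1 - β) • ζ.toSignedMeasure) -
              ζ.toSignedMeasure))⁻¹ •
            ((signedPi (fun _ : Fin p =>
                β • ξ.toSignedMeasure + (1 - β) • ζ.toSignedMeasure)).map A.mulVec -
              (signedPi (fun _ : Fin p => ζ.toSignedMeasure)).map A.mulVec) -
          ∑ k : Fin p,
            (signedPi (fun i => if i = k then
                (kolNorm1 (ξ.toSignedMeasure - ζ.toSignedMeasure))⁻¹ •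
                  (ξ.toSignedMeasure - ζ.toSignedMeasure)
              else ζ.toSignedMeasure)).map A.mulVec))
      (nhdsWithin 0 (Set.Ioo (0 : ℝ) 1)) (nhds 0) := by
  set ξ' := ξ.toSignedMeasure with hξ'
  set ζ' := ζ.toSignedMeasure with hζ'
  set ν' := ξ' - ζ' with hν'
  set c := kolNorm1 ν' with hc'
  have hc : 0 < c := kolNorm1_pos hξζ
  have hA : Measurable A.mulVec := by
    have := (Matrix.mulVecLin A).continuous_of_finiteDimensional.measurable
    exact this
  set M : Finset (Fin p) → SignedMeasure (Fin p → ℝ) := fun S =>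
    (signedPi (fun i => if i ∈ S then ν' else ζ')).map A.mulVec with hM
  set K : ℝ := c⁻¹ * ∑ S : Finset (Fin p), sBound (fun i => if i ∈ S then ν' else ζ')
    with hK
  have hK0 : 0 ≤ K := mul_nonneg (inv_nonneg.mpr hc.le)
    (Finset.sum_nonneg fun S _ => sBound_nonneg _)
  refine squeeze_zero' (g := fun β => β * K)
    (Eventually.of_forall fun β => kolNorm_nonneg _) ?_ ?_
  · filter_upwards [self_mem_nhdsWithin] with β hβ
    obtain ⟨hβ0, hβ1⟩ := hβ
    have hβne : β ≠ 0 := ne_of_gt hβ0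
    -- identify the normalizing constant
    have hk1 : kolNorm1 ((β • ξ' + (1 - β) • ζ') - ζ') = β * c := by
      rw [show (β • ξ' + (1 - β) • ζ') - ζ' = β • ν' from by rw [hν']; module,
        kolNorm1_smul ν' hβ0.le]
    -- expand the product signed measure
    have hexp : signedPi (fun _ : Fin p => β • ξ' + (1 - β) • ζ')
        = ∑ S : Finset (Fin p), β ^ S.card • signedPi (fun i => if i ∈ S then ν' else ζ') := by
      rw [show (fun _ : Fin p => β • ξ' + (1 - β) • ζ') = (fun _ : Fin p => ζ' + β • ν') from
        funext fun _ => by rw [hν']; module]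
      exact signedPi_expand ζ' ν' β
    have hms : ∀ (t : Finset (Finset (Fin p)))
        (g : Finset (Fin p) → SignedMeasure (Fin p → ℝ)),
        ((∑ S ∈ t, g S).map A.mulVec) = ∑ S ∈ t, (g S).map A.mulVec := by
      intro t g
      have h := map_sum (VectorMeasure.mapₗ (R := ℝ) A.mulVec) g t
      simp only [VectorMeasure.mapₗ_apply] at h
      exact h
    have hz : (signedPi (fun _ : Fin p => ζ')).map A.mulVec = M ∅ := by
      simp only [hM]
      exact congrArg (fun m : SignedMeasure (Fin p → ℝ) => m.map A.mulVec)
        (congrArg signedPi (funext fun i => by simp))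
    have hT : ∀ k : Fin p,
        (signedPi (fun i => if i = k then c⁻¹ • ν' else ζ')).map A.mulVec
          = c⁻¹ • M {k} := by
      intro k
      rw [show (fun i => if i = k then c⁻¹ • ν' else ζ')
          = (fun i : Fin p => if i = k then c⁻¹ • ν' else ζ') from rfl,
        signedPi_smul_slot,
        show (fun i : Fin p => if i = k then ν' else ζ')
          = (fun i : Fin p => if i ∈ ({k} : Finset (Fin p)) then ν' else ζ') from
          funext fun i => by simp,
        VectorMeasure.map_smul]
    -- the main algebraic identity
    set g : Finset (Fin p) → SignedMeasure (Fin p → ℝ) :=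
      fun S => ((β * c)⁻¹ * β ^ S.card) • M S with hg
    have key : ((kolNorm1 ((β • ξ' + (1 - β) • ζ') - ζ'))⁻¹ •
          ((signedPi (fun _ : Fin p => β • ξ' + (1 - β) • ζ')).map A.mulVec -
            (signedPi (fun _ : Fin p => ζ')).map A.mulVec) -
        ∑ k : Fin p, (signedPi (fun i => if i = k then c⁻¹ • ν' else ζ')).map A.mulVec)
        = ∑ S ∈ Finset.univ.filter (fun S : Finset (Fin p) => 2 ≤ S.card), g S := by
      have hfold : ∀ S : Finset (Fin p),
          VectorMeasure.map (signedPi fun i => if i ∈ S then ν' else ζ') A.mulVec = M S :=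
        fun S => rfl
      rw [hk1, hexp, hms, hz]
      simp only [VectorMeasure.map_smul, hfold, hT]
      have e1 : (β * c)⁻¹ • (∑ S : Finset (Fin p), β ^ S.card • M S)
          = ∑ S : Finset (Fin p), g S := by
        rw [Finset.smul_sum]
        exact Finset.sum_congr rfl fun S _ => by rw [hg, smul_smul]
      have e2 : (∑ S : Finset (Fin p), g S)
          = g ∅ + (∑ S ∈ Finset.univ.filter (fun S : Finset (Fin p) => S.card = 1), g S)
            + ∑ S ∈ Finset.univ.filter (fun S : Finset (Fin p) => 2 ≤ S.card), g S := by
        have s1 : Finset.univ.filter (fun S : Finset (Fin p) => S.card = 0) = {∅} := by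
          ext S; simp [Finset.card_eq_zero]
        have s2 : (Finset.univ.filter (fun S : Finset (Fin p) => ¬S.card = 0)).filter
            (fun S => S.card = 1) = Finset.univ.filter (fun S : Finset (Fin p) => S.card = 1) := by
          rw [Finset.filter_filter]; ext S
          simp only [Finset.mem_filter, Finset.mem_univ, true_and]; omega
        have s3 : (Finset.univ.filter (fun S : Finset (Fin p) => ¬S.card = 0)).filter
            (fun S => ¬S.card = 1)
            = Finset.univ.filter (fun S : Finset (Fin p) => 2 ≤ S.card) := by
          rw [Finset.filter_filter]; ext S
          simp only [Finset.mem_filter, Finset.mem_univ, true_and]; omega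
        rw [← Finset.sum_filter_add_sum_filter_not Finset.univ
            (fun S : Finset (Fin p) => S.card = 0) g,
          ← Finset.sum_filter_add_sum_filter_not
            (Finset.univ.filter (fun S : Finset (Fin p) => ¬S.card = 0))
            (fun S : Finset (Fin p) => S.card = 1) g,
          s1, s2, s3, Finset.sum_singleton, add_assoc]
      have e3 : g ∅ = (β * c)⁻¹ • M ∅ := by
        rw [hg]; simp
      have e4 : (∑ S ∈ Finset.univ.filter (fun S : Finset (Fin p) => S.card = 1), g S)
          = ∑ k : Fin p, c⁻¹ • M {k} := by
        rw [show Finset.univ.filter (fun S : Finset (Fin p) => S.card = 1)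
            = Finset.univ.image (fun k : Fin p => ({k} : Finset (Fin p))) from by
          ext S; simp [Finset.card_eq_one, eq_comm],
          Finset.sum_image (fun k _ l _ h => Finset.singleton_injective h)]
        refine Finset.sum_congr rfl fun k _ => ?_
        simp only [hg]
        rw [Finset.card_singleton, pow_one,
          show (β * c)⁻¹ * β = c⁻¹ from by field_simp]
      rw [smul_sub, e1, e2, e3, e4]
      abel
    rw [key]
    -- now the norm bound
    refine Real.iSup_le (fun x => ?_) (by positivity)
    rw [vm_sum_apply]
    refine (Finset.abs_sum_le_sum_abs _ _).trans ?_
    have hterm : ∀ S ∈ Finset.univ.filter (fun S : Finset (Fin p) => 2 ≤ S.card),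
        |g S (Set.Iic x)| ≤ (β * c⁻¹) * sBound (fun i => if i ∈ S then ν' else ζ') := by
      intro S hS
      rw [Finset.mem_filter] at hS
      rw [hg]
      simp only []
      rw [VectorMeasure.smul_apply, smul_eq_mul, abs_mul]
      have hMb : |M S (Set.Iic x)| ≤ sBound (fun i => if i ∈ S then ν' else ζ') := by
        have h1 : M S (Set.Iic x)
            = signedPi (fun i => if i ∈ S then ν' else ζ') (A.mulVec ⁻¹' Set.Iic x) :=
          VectorMeasure.map_apply _ hA (measurableSet_Iic_pi x)
        rw [h1]
        exact abs_signedPi_le _ (hA (measurableSet_Iic_pi x))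
      have hsc : |(β * c)⁻¹ * β ^ S.card| ≤ β * c⁻¹ := by
        rw [abs_of_nonneg (by positivity), mul_inv]
        have h2 : β ^ S.card ≤ β ^ 2 := pow_le_pow_of_le_one hβ0.le hβ1.le hS.2
        calc β⁻¹ * c⁻¹ * β ^ S.card ≤ β⁻¹ * c⁻¹ * β ^ 2 :=
              mul_le_mul_of_nonneg_left h2 (by positivity)
          _ = β * c⁻¹ := by field_simp
      exact mul_le_mul hsc hMb (abs_nonneg _) (by positivity)
    refine (Finset.sum_le_sum hterm).trans ?_
    rw [← Finset.mul_sum]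
    calc (β * c⁻¹) * ∑ S ∈ Finset.univ.filter (fun S : Finset (Fin p) => 2 ≤ S.card),
          sBound (fun i => if i ∈ S then ν' else ζ')
        ≤ (β * c⁻¹) * ∑ S : Finset (Fin p), sBound (fun i => if i ∈ S then ν' else ζ') := by
          refine mul_le_mul_of_nonneg_left ?_ (by positivity)
          exact Finset.sum_le_sum_of_subset_of_nonneg (Finset.filter_subset _ _)
            (fun S _ _ => sBound_nonneg _)
      _ = β * K := by rw [hK]; ring
  · have h : Tendsto (fun β : ℝ => β * K) (nhds 0) (nhds 0) := by
      have h0 : Tendsto (fun β : ℝ => β * K) (nhds 0) (nhds (0 * K)) :=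
        (continuous_id.mul (continuous_const (y := K))).tendsto (0 : ℝ)
      simpa using h0
    exact h.mono_left nhdsWithin_le_nhds
end

section
/- Let F be a cumulative distribution function on ℝ^p and ρ(x,y) = √(F(x) + F(y) − 2F(x∧y)). Then the pseudometric space (ℝ^p, ρ) is totally bounded. -/
open MeasureTheory Set Filter
open scoped Topology

lemma sel_lemma (G : ℝ → ℝ) (hmono : Monotone G)
    (hrc : ∀ a, ContinuousWithinAt G (Set.Ici a) a)
    (h0 : Tendsto G atBot (𝓝 0)) (h1 : ∀ t, G t ≤ 1)
    {δ : ℝ} (hδ : 0 < δ) :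
    ∃ S : Finset ℝ, ∀ t, G t ≤ δ ∨ ∃ s ∈ S, s ≤ t ∧ G t - G s ≤ δ := by
  set N : ℕ := ⌈1/δ⌉₊ with hN
  set sfun : ℕ → ℝ := fun k => sInf {t | (k : ℝ) * δ ≤ G t} with hsfun
  refine ⟨(Finset.range (N+1)).image sfun, fun t => ?_⟩
  set k : ℕ := ⌊G t / δ⌋₊ with hk
  rcases Nat.eq_zero_or_pos k with hk0 | hk1
  · left
    have h : G t / δ < 1 := Nat.floor_eq_zero.mp hk0
    exact le_of_lt ((div_lt_one hδ).mp h)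
  · right
    have hnn : 0 ≤ G t / δ := by
      by_contra h
      push_neg at h
      have : k = 0 := Nat.floor_eq_zero.mpr (h.trans zero_lt_one)
      omega
    have hka : (k : ℝ) ≤ G t / δ := Nat.floor_le hnn
    have hkle : (k : ℝ) * δ ≤ G t := by
      rw [← le_div_iff₀ hδ]; exact hka
    set A : Set ℝ := {t | (k : ℝ) * δ ≤ G t} with hA
    have htA : t ∈ A := hkle
    have hkδpos : 0 < (k : ℝ) * δ := by
      have h1k : (1:ℝ) ≤ (k:ℝ) := by exact_mod_cast hk1
      nlinarith
    obtain ⟨t₀, ht₀⟩ : ∃ t₀, G t₀ < (k : ℝ) * δ :=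
      ((tendsto_order.1 h0).2 _ hkδpos).exists
    have hbdd : BddBelow A := ⟨t₀, fun u hu => by
      by_contra h
      push_neg at h
      exact absurd (le_trans hu (hmono h.le)) (not_le.mpr ht₀)⟩
    have ha₀ : sfun k ≤ t := csInf_le hbdd htA
    have hGa : (k : ℝ) * δ ≤ G (sfun k) := by
      have hne : A.Nonempty := ⟨t, htA⟩
      have htd : Tendsto G (𝓝[>] (sfun k)) (𝓝 (G (sfun k))) :=
        (hrc (sfun k)).mono_left (nhdsWithin_mono _ Ioi_subset_Ici_self)
      refine ge_of_tendsto htd ?_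
      refine Filter.eventually_of_mem self_mem_nhdsWithin fun b hb => ?_
      obtain ⟨u, hu, hub⟩ := exists_lt_of_csInf_lt hne hb
      exact le_trans hu (hmono hub.le)
    have hlt : G t < ((k : ℝ) + 1) * δ := by
      have h2 := Nat.lt_floor_add_one (G t / δ)
      rw [div_lt_iff₀ hδ] at h2
      exact_mod_cast h2
    refine ⟨sfun k, Finset.mem_image_of_mem _ (Finset.mem_range.mpr ?_), ha₀, by linarith⟩
    have hkN : k ≤ N := by
      rw [hN]
      calc k = ⌊G t / δ⌋₊ := hk
        _ ≤ ⌊1 / δ⌋₊ := Nat.floor_le_floor (by gcongr; exact h1 t)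
        _ ≤ ⌈1 / δ⌉₊ := Nat.floor_le_ceil _
    omega

/-- Let `F` be the CDF of a probability measure on ℝ^p and
`ρ(x,y) = √(F(x) + F(y) − 2F(x∧y))`. Then the pseudometric space `(ℝ^p, ρ)` is
totally bounded: for every `ε > 0` there are finitely many points whose open
`ρ`-balls of radius `ε` cover ℝ^p. -/
theorem cdf_pseudometric_totallyBounded
    {p : ℕ} (Q : Measure (Fin p → ℝ)) [IsProbabilityMeasure Q]
    (F : (Fin p → ℝ) → ℝ) (hF : ∀ x, F x = (Q (Set.Iic x)).toReal)
    (ρ : (Fin p → ℝ) → (Fin p → ℝ) → ℝ)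
    (hρ : ∀ x y, ρ x y = Real.sqrt (F x + F y - 2 * F (x ⊓ y))) :
    ∀ ε > (0 : ℝ), ∃ s : Finset (Fin p → ℝ), ∀ x : Fin p → ℝ, ∃ y ∈ s, ρ x y < ε := by
  classical
  intro ε hε
  set δ : ℝ := ε^2 / (p + 3) with hδdef
  have hδ : 0 < δ := div_pos (by positivity) (by positivity)
  -- coordinate sets and marginal CDFs
  set E : Fin p → ℝ → Set (Fin p → ℝ) := fun i t => {z | z i ≤ t} with hE
  have hEmeas : ∀ i t, MeasurableSet (E i t) := fun i t =>
    (measurable_pi_apply i) measurableSet_Iic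
  set μ : Fin p → Measure ℝ := fun i => Q.map (fun z => z i) with hμ
  haveI : ∀ i, IsProbabilityMeasure (μ i) := fun i =>
    Measure.isProbabilityMeasure_map (measurable_pi_apply i).aemeasurable
  set G : Fin p → ℝ → ℝ := fun i => ProbabilityTheory.cdf (μ i) with hG
  have hGeq : ∀ i t, G i t = (Q (E i t)).toReal := by
    intro i t
    rw [hG]
    simp only
    rw [ProbabilityTheory.cdf_eq_real, measureReal_def, hμ]
    simp only
    rw [Measure.map_apply (measurable_pi_apply i) measurableSet_Iic]
    rfl
  -- Iic as intersection
  have hIic : ∀ x : Fin p → ℝ, Set.Iic x = ⋂ i, E i (x i) := by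
    intro x
    ext z
    simp [Set.mem_Iic, Pi.le_def, hE]
  have hIicMeas : ∀ x : Fin p → ℝ, MeasurableSet (Set.Iic x) := by
    intro x; rw [hIic]; exact MeasurableSet.iInter fun i => hEmeas i _
  -- selection for each coordinate
  have hsel : ∀ i : Fin p, ∃ S : Finset ℝ,
      ∀ t, G i t ≤ δ ∨ ∃ s ∈ S, s ≤ t ∧ G i t - G i s ≤ δ := by
    intro i
    exact sel_lemma (G i) (ProbabilityTheory.monotone_cdf _)
      (fun a => (ProbabilityTheory.cdf (μ i)).right_continuous a)
      (ProbabilityTheory.tendsto_cdf_atBot _) (fun t => ProbabilityTheory.cdf_le_one _ t) hδ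
  choose S hS using hsel
  -- bad-case anchor points
  have hb : ∀ i : Fin p, ∃ b : ℝ, G i b ≤ δ := by
    intro i
    have := (ProbabilityTheory.tendsto_cdf_atBot (μ i)).eventually_le_const hδ
    exact this.exists
  choose b hbδ using hb
  set T : Fin p → Finset ℝ := fun i => insert (b i) (S i) with hT
  refine ⟨Fintype.piFinset T, fun x => ?_⟩
  set good : Fin p → Prop := fun i => ∃ s ∈ S i, s ≤ x i ∧ G i (x i) - G i s ≤ δ with hgood
  set y : Fin p → ℝ := fun i => if h : good i then h.choose else b i with hy
  have hyT : y ∈ Fintype.piFinset T := by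
    rw [Fintype.mem_piFinset]
    intro i
    rw [hy]
    by_cases h : good i
    · simp only [dif_pos h]
      exact Finset.mem_insert_of_mem h.choose_spec.1
    · simp only [dif_neg h]
      exact Finset.mem_insert_self _ _
  refine ⟨y, hyT, ?_⟩
  -- basic facts
  have hFnn : ∀ z, 0 ≤ F z := fun z => (hF z) ▸ ENNReal.toReal_nonneg
  have hFle : ∀ (z : Fin p → ℝ) (i : Fin p), F z ≤ G i (z i) := by
    intro z i
    rw [hF, hGeq]
    exact ENNReal.toReal_mono (measure_ne_top Q _)
      (measure_mono (by rw [hIic]; exact Set.iInter_subset _ i))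
  have key : F x + F y - 2 * F (x ⊓ y) < ε ^ 2 := by
    by_cases hall : ∀ i, good i
    · -- y ≤ x, so x ⊓ y = y
      have hyx : y ≤ x := by
        intro i
        rw [hy]
        simp only [dif_pos (hall i)]
        exact (hall i).choose_spec.2.1
      have hinf : x ⊓ y = y := inf_eq_right.mpr hyx
      rw [hinf]
      have hsub : Set.Iic x ⊆ Set.Iic y ∪ ⋃ i, (E i (x i) \ E i (y i)) := by
        intro z hz
        by_cases hzy : z ∈ Set.Iic y
        · exact Or.inl hzy
        · right
          rw [Set.mem_Iic, Pi.le_def] at hzy hz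
          push_neg at hzy
          obtain ⟨i, hi⟩ := hzy
          exact Set.mem_iUnion.mpr ⟨i, hz i, not_le.mpr hi⟩
      have hmeasle : Q (Set.Iic x) ≤ Q (Set.Iic y) + ∑ i, Q (E i (x i) \ E i (y i)) := by
        calc Q (Set.Iic x) ≤ Q (Set.Iic y ∪ ⋃ i, (E i (x i) \ E i (y i))) := measure_mono hsub
          _ ≤ Q (Set.Iic y) + Q (⋃ i, (E i (x i) \ E i (y i))) := measure_union_le _ _
          _ ≤ Q (Set.Iic y) + ∑ i, Q (E i (x i) \ E i (y i)) := by
              gcongr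
              exact measure_iUnion_fintype_le _ _
      have hdiff : ∀ i, (Q (E i (x i) \ E i (y i))).toReal = G i (x i) - G i (y i) := by
        intro i
        have hEsub : E i (y i) ⊆ E i (x i) := fun z hz => le_trans hz (hyx i)
        rw [measure_diff hEsub ((hEmeas i _).nullMeasurableSet) (measure_ne_top Q _),
          ENNReal.toReal_sub_of_le (measure_mono hEsub) (measure_ne_top Q _), hGeq, hGeq]
      have htr : F x ≤ F y + ∑ i, (G i (x i) - G i (y i)) := by
        rw [hF, hF]
        calc (Q (Set.Iic x)).toReal
            ≤ (Q (Set.Iic y) + ∑ i, Q (E i (x i) \ E i (y i))).toReal := by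
              apply ENNReal.toReal_mono _ hmeasle
              refine ENNReal.add_ne_top.mpr ⟨measure_ne_top Q _, ?_⟩
              exact (ENNReal.sum_lt_top.mpr fun i _ => (measure_lt_top Q _)).ne
          _ = (Q (Set.Iic y)).toReal + ∑ i, (Q (E i (x i) \ E i (y i))).toReal := by
              rw [ENNReal.toReal_add (measure_ne_top Q _)
                (ENNReal.sum_lt_top.mpr fun i _ => (measure_lt_top Q _)).ne,
                ENNReal.toReal_sum (fun i _ => measure_ne_top Q _)]
          _ = (Q (Set.Iic y)).toReal + ∑ i, (G i (x i) - G i (y i)) := by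
              congr 1
              exact Finset.sum_congr rfl fun i _ => hdiff i
      have hsumle : ∑ i, (G i (x i) - G i (y i)) ≤ (p : ℝ) * δ := by
        calc ∑ i, (G i (x i) - G i (y i)) ≤ ∑ _i : Fin p, δ := by
              refine Finset.sum_le_sum fun i _ => ?_
              have hgi := hall i
              rw [hy]
              simp only [dif_pos hgi]
              exact hgi.choose_spec.2.2
          _ = (p : ℝ) * δ := by simp [mul_comm]
      have hpδ : (p : ℝ) * δ < ε ^ 2 := by
        rw [hδdef, ← mul_div_assoc, div_lt_iff₀ (by positivity : (0:ℝ) < (p:ℝ)+3)]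
        have hε2 : 0 < ε ^ 2 := by positivity
        nlinarith
      linarith
    · push_neg at hall
      obtain ⟨i, hi⟩ := hall
      have hGxi : G i (x i) ≤ δ := by
        rcases hS i (x i) with h | h
        · exact h
        · exact absurd h hi
      have hFx : F x ≤ δ := le_trans (hFle x i) hGxi
      have hFy : F y ≤ δ := by
        refine le_trans (hFle y i) ?_
        rw [hy]
        simp only [dif_neg hi]
        exact hbδ i
      have h2δ : 2 * δ < ε ^ 2 := by
        rw [hδdef, ← mul_div_assoc, div_lt_iff₀ (by positivity : (0:ℝ) < (p:ℝ)+3)]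
        have hε2 : 0 < ε ^ 2 := by positivity
        have hp0 : (0:ℝ) ≤ (p:ℝ) := Nat.cast_nonneg p
        nlinarith
      have := hFnn (x ⊓ y)
      linarith
  rw [hρ]
  exact (Real.sqrt_lt' hε).mpr key
end
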